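/- Let d ≥ 2 and σ_d(x)=d·x on ℝ/ℤ. Suppose G is a periodic gap of period n of a σ_d-invariant geolamination whose first-return map σ_d^n restricted to the boundary circle points G' = G ∩ (ℝ/ℤ) is monotonically semiconjugate (via a monotone degree-one circle map φ) to an irrational rotation. Then every fiber of φ that is a union of consecutive edges of G contains only finitely many edges, given that every edge of G is precritical (some iterate degenerate) and that the irrational rotation has no periodic points. -/

import Mathlib

open Function

noncomputable section

/-- The circle ℝ/ℤ. -/
abbrev S1 := AddCircle (1 : ℝ)

/-- σ_d : multiplication by d on ℝ/ℤ. -/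
def sig (d : ℕ) : S1 → S1 := fun x => d • x

/-- Two chords of the closed unit disk, with endpoint pairs {a,b} and {c,e}, are linked
(cross in the open unit disk) iff the pairs strictly separate each other on the circle. -/
def Linked (a b c e : S1) : Prop :=
  (sbtw a c b ∧ sbtw b e a) ∨ (sbtw a e b ∧ sbtw b c a)


/-- `(a,b)` is an edge of the convex hull of the circle set `G`: both endpoints are in `G`,
they are distinct, and one of the open arcs they cut off contains no point of `G`. -/
def IsEdge (G : Set S1) (a b : S1) : Prop :=
  a ∈ G ∧ b ∈ G ∧ a ≠ b ∧ ∀ c ∈ G, ¬ sbtw a c b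


namespace Stmt16Aux
open Set

noncomputable def rho (x : S1) : ℝ :=
  (QuotientAddGroup.equivIcoMod (one_pos : (0:ℝ) < 1) 0 x : ℝ)

noncomputable def iot (x : S1) : ℝ :=
  (QuotientAddGroup.equivIocMod (one_pos : (0:ℝ) < 1) 0 x : ℝ)

lemma btw_unfold (a b c : S1) : btw a b c ↔ rho (b - a) ≤ iot (c - a) := Iff.rfl

lemma rho_coe (x : ℝ) : rho ((x : ℝ) : S1) = toIcoMod (one_pos : (0:ℝ)<1) 0 x := by
  simp [rho, QuotientAddGroup.equivIcoMod_coe]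

lemma iot_coe (x : ℝ) : iot ((x : ℝ) : S1) = toIocMod (one_pos : (0:ℝ)<1) 0 x := by
  simp [iot, QuotientAddGroup.equivIocMod_coe]

lemma rho_mem (x : S1) : rho x ∈ Ico (0:ℝ) 1 := by
  have := (QuotientAddGroup.equivIcoMod (one_pos : (0:ℝ)<1) 0 x).2
  simpa [rho] using this

lemma rho_nonneg (x : S1) : 0 ≤ rho x := (rho_mem x).1
lemma rho_lt_one (x : S1) : rho x < 1 := (rho_mem x).2

lemma coe_rho (x : S1) : ((rho x : ℝ) : S1) = x := by
  induction x using QuotientAddGroup.induction_on with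
  | H r =>
    rw [rho_coe]
    have h : toIcoMod (one_pos : (0:ℝ)<1) 0 r = r - toIcoDiv (one_pos : (0:ℝ)<1) 0 r • (1:ℝ) := rfl
    rw [h]
    have : ((toIcoDiv (one_pos : (0:ℝ)<1) 0 r • (1:ℝ) : ℝ) : S1) = 0 := by
      rw [AddCircle.coe_eq_zero_iff]; exact ⟨_, rfl⟩
    rw [AddCircle.coe_sub, this, sub_zero]

lemma rho_eq_of {a : S1} {r : ℝ} (h0 : 0 ≤ r) (h1 : r < 1) (h : ((r:ℝ) : S1) = a) :
    rho a = r := by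
  subst h; rw [rho_coe]
  exact (toIcoMod_eq_self _).mpr ⟨h0, by simpa using h1⟩

lemma rho_zero : rho (0 : S1) = 0 :=
  rho_eq_of le_rfl one_pos (by norm_cast)

lemma rho_eq_zero_iff {x : S1} : rho x = 0 ↔ x = 0 := by
  constructor
  · intro h; have := coe_rho x; rw [h] at this; simpa using this.symm
  · rintro rfl; exact rho_zero

lemma iot_eq_of {a : S1} {r : ℝ} (h0 : 0 < r) (h1 : r ≤ 1) (h : ((r:ℝ) : S1) = a) :
    iot a = r := by
  subst h; rw [iot_coe]
  exact (toIocMod_eq_self _).mpr ⟨h0, by simpa using h1⟩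

lemma iot_zero : iot (0 : S1) = 1 :=
  iot_eq_of one_pos le_rfl (by exact_mod_cast AddCircle.coe_period (p := (1:ℝ)))

lemma iot_eq_rho {x : S1} (hx : x ≠ 0) : iot x = rho x :=
  iot_eq_of (lt_of_le_of_ne (rho_nonneg x) (fun h => hx (rho_eq_zero_iff.mp h.symm)))
    (rho_lt_one x).le (coe_rho x)


noncomputable def del (a b : S1) : ℝ := rho (b - a)

lemma coe_del (a b : S1) : ((del a b : ℝ) : S1) = b - a := coe_rho _
lemma del_nonneg (a b : S1) : 0 ≤ del a b := rho_nonneg _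
lemma del_lt_one (a b : S1) : del a b < 1 := rho_lt_one _

lemma del_eq_of {a b : S1} {r : ℝ} (h0 : 0 ≤ r) (h1 : r < 1) (h : ((r:ℝ) : S1) = b - a) :
    del a b = r := rho_eq_of h0 h1 h

lemma del_eq_zero_iff {a b : S1} : del a b = 0 ↔ a = b := by
  rw [del, rho_eq_zero_iff, sub_eq_zero, eq_comm]

lemma del_self (a : S1) : del a a = 0 := del_eq_zero_iff.mpr rfl

lemma del_pos {a b : S1} (h : a ≠ b) : 0 < del a b :=
  lt_of_le_of_ne (del_nonneg a b) (fun h' => h (del_eq_zero_iff.mp h'.symm))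

lemma del_inj {a b c : S1} (h : del a b = del a c) : b = c := by
  have h1 := coe_del a b
  have h2 := coe_del a c
  rw [h] at h1; rw [h1] at h2; exact sub_left_injective h2

lemma del_rev {a b : S1} (h : a ≠ b) : del b a = 1 - del a b := by
  refine del_eq_of (by linarith [del_lt_one a b]) (by linarith [del_pos h]) ?_
  rw [AddCircle.coe_sub, coe_del]
  have : ((1:ℝ) : S1) = 0 := by exact_mod_cast AddCircle.coe_period (p := (1:ℝ))
  rw [this]; abel

/-- Key: betweenness in terms of the delta coordinates. -/
lemma btw_iff (a b c : S1) : btw a b c ↔ (c = a ∨ del a b ≤ del a c) := by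
  rw [btw_unfold]
  by_cases hca : c = a
  · subst hca
    simp only [sub_self, iot_zero, eq_self_iff_true, true_or, iff_true]
    exact (rho_lt_one _).le
  · have : c - a ≠ 0 := sub_ne_zero.mpr hca
    rw [iot_eq_rho this]
    simp only [hca, false_or]
    rfl

lemma sbtw_iff (a b c : S1) : sbtw a b c ↔ 0 < del a b ∧ del a b < del a c := by
  rw [sbtw_iff_not_btw, btw_iff]
  push_neg
  constructor
  · rintro ⟨hac, hlt⟩
    -- hac : a ≠ c, hlt : del c a < del c b
    have hac' : a ≠ c := hac
    set u := del a b with hu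
    set v := del a c with hv
    have hv0 : 0 < v := del_pos hac'
    have hv1 : v < 1 := del_lt_one a c
    have hca : del c a = 1 - v := del_rev hac'
    by_cases hba : b = a
    · exfalso
      rw [show del c b = del c a from by rw [hba], hca] at hlt
      linarith
    by_cases hbc : b = c
    · exfalso; subst hbc
      rw [hca, del_self] at hlt; linarith
    have hu0 : 0 < u := del_pos (Ne.symm hba)
    have hu1 : u < 1 := del_lt_one a b
    have huv : u ≠ v := fun h => hbc (del_inj (hu ▸ hv ▸ h))
    rcases lt_or_gt_of_ne huv with h | h
    · exact ⟨hu0, h⟩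
    · -- v < u : del c b = u - v, contradiction with hlt
      exfalso
      have : del c b = u - v := by
        refine del_eq_of (by linarith) (by linarith) ?_
        rw [AddCircle.coe_sub, coe_del, coe_del]; abel
      rw [this, hca] at hlt; linarith
  · rintro ⟨hu0, hlt⟩
    set u := del a b with hu
    set v := del a c with hv
    have hv0 : 0 < v := lt_trans hu0 hlt
    have hv1 : v < 1 := del_lt_one a c
    have hac : a ≠ c := fun h => by rw [h, del_self] at hv; exact absurd hv (ne_of_gt hv0)
    have hba : b ≠ a := fun h => by rw [h, del_self] at hu; exact absurd hu (ne_of_gt hu0)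
    refine ⟨hac, ?_⟩
    rw [del_rev hac]
    have : del c b = 1 - v + u := by
      refine del_eq_of (by linarith) (by linarith) ?_
      rw [show ((1 - v + u : ℝ) : S1) = ((1:ℝ):S1) - ((v:ℝ):S1) + ((u:ℝ):S1) by rw [AddCircle.coe_add, AddCircle.coe_sub]]
      have h1 : ((1:ℝ) : S1) = 0 := by exact_mod_cast AddCircle.coe_period (p := (1:ℝ))
      rw [h1, hu, hv, coe_del, coe_del]; abel
    rw [this]; linarith

lemma sbtw_or {a b c : S1} (hab : a ≠ b) (hac : a ≠ c) (hbc : b ≠ c) :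
    sbtw a b c ∨ sbtw a c b := by
  rw [sbtw_iff, sbtw_iff]
  have h1 : 0 < del a b := del_pos hab
  have h2 : 0 < del a c := del_pos hac
  have h3 : del a b ≠ del a c := fun h => hbc (del_inj h)
  rcases lt_or_gt_of_ne h3 with h | h
  · exact Or.inl ⟨h1, h⟩
  · exact Or.inr ⟨h2, h⟩


lemma edge_unique_right {G : Set S1} {a b b' : S1} (h : IsEdge G a b) (h' : IsEdge G a b') :
    b = b' := by
  by_contra hne
  rcases sbtw_or h.2.2.1 h'.2.2.1 hne with hs | hs
  · exact h'.2.2.2 b h.2.1 hs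
  · exact h.2.2.2 b' h'.2.1 hs

lemma edge_unique_left {G : Set S1} {a a' b : S1} (h : IsEdge G a b) (h' : IsEdge G a' b) :
    a = a' := by
  by_contra hne
  by_cases hab : a' = b
  · exact h'.2.2.1 hab
  rcases sbtw_or hne h.2.2.1 hab with hs | hs
  · exact h.2.2.2 a' h'.1 hs
  · -- sbtw a b a' ; cyclic twice gives sbtw a' a b
    exact h'.2.2.2 a h.1 (sbtw_cyclic_left (sbtw_cyclic_left hs))

lemma edges_disjoint {G : Set S1} {a b a' b' x : S1} (h : IsEdge G a b) (h' : IsEdge G a' b')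
    (hne : (a, b) ≠ (a', b')) (hx : sbtw a x b) (hx' : sbtw a' x b') : False := by
  have haa : a ≠ a' := by
    intro hh; subst hh
    exact hne (by rw [edge_unique_right h h'])
  have hab' : a ≠ b := h.2.2.1
  have ha'b' : a' ≠ b' := h'.2.2.1
  rw [sbtw_iff] at hx hx'
  set β := del a b with hβ
  set η := del a x with hη
  obtain ⟨hη0, hηβ⟩ := hx
  have hβ1 : β < 1 := del_lt_one a b
  set γ := del a a' with hγ
  have hγ0 : 0 < γ := del_pos haa
  have hγ1 : γ < 1 := del_lt_one a a'
  -- a' not strictly inside (a,b): γ ≥ β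
  have hγβ : β ≤ γ := by
    by_contra hc; push_neg at hc
    exact h.2.2.2 a' h'.1 ((sbtw_iff a a' b).mpr ⟨hγ0, hc⟩)
  set β₂ := del a b' with hβ₂
  have hβ₂1 : β₂ < 1 := del_lt_one a b'
  have hβ₂cases : β₂ = 0 ∨ β ≤ β₂ := by
    by_cases hb'a : b' = a
    · left; rw [hβ₂, del_eq_zero_iff.mpr hb'a.symm]
    · right
      by_contra hc; push_neg at hc
      have hβ₂0 : 0 < β₂ := del_pos (Ne.symm hb'a)
      exact h.2.2.2 b' h'.2.1 ((sbtw_iff a b' b).mpr ⟨hβ₂0, hc⟩)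
  -- del a' x = η - γ + 1
  have hax' : del a' x = η - γ + 1 := by
    refine del_eq_of (by linarith) (by linarith) ?_
    rw [show ((η - γ + 1 : ℝ) : S1) = ((η:ℝ):S1) - ((γ:ℝ):S1) + ((1:ℝ):S1) by
      rw [AddCircle.coe_add, AddCircle.coe_sub]]
    rw [show ((1:ℝ) : S1) = 0 by exact_mod_cast AddCircle.coe_period (p := (1:ℝ))]
    rw [hη, hγ, coe_del, coe_del]; abel
  obtain ⟨hx'0, hx'lt⟩ := hx'
  rw [hax'] at hx'lt
  -- compare β₂ with γ
  rcases lt_trichotomy β₂ γ with hcmp | hcmp | hcmp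
  · -- del a' b' = β₂ - γ + 1
    have hab2 : del a' b' = β₂ - γ + 1 := by
      refine del_eq_of (by linarith [del_nonneg a b']) (by linarith) ?_
      rw [show ((β₂ - γ + 1 : ℝ) : S1) = ((β₂:ℝ):S1) - ((γ:ℝ):S1) + ((1:ℝ):S1) by
        rw [AddCircle.coe_add, AddCircle.coe_sub]]
      rw [show ((1:ℝ) : S1) = 0 by exact_mod_cast AddCircle.coe_period (p := (1:ℝ))]
      rw [hβ₂, hγ, coe_del, coe_del]; abel
    rw [hab2] at hx'lt
    -- η < β₂
    have hηβ₂ : η < β₂ := by linarith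
    rcases hβ₂cases with h0 | hββ₂
    · linarith
    · -- sbtw a' a b' contradicts edge (a', b')
      have h1 : del a' a = 1 - γ := del_rev haa
      have : sbtw a' a b' := (sbtw_iff a' a b').mpr (by
        constructor
        · rw [h1]; linarith
        · rw [h1, hab2]; linarith)
      exact h'.2.2.2 a h.1 this
  · -- β₂ = γ means b' = a'
    exact ha'b' (del_inj (show del a b' = del a a' by rw [← hβ₂, ← hγ, hcmp])).symm
  · -- del a' b' = β₂ - γ
    have hab2 : del a' b' = β₂ - γ := by
      refine del_eq_of (by linarith) (by linarith) ?_
      rw [AddCircle.coe_sub, hβ₂, hγ, coe_del, coe_del]; abel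
    rw [hab2] at hx'lt
    linarith


lemma coe_one_eq_zero : ((1:ℝ) : S1) = 0 := by
  exact_mod_cast AddCircle.coe_period (p := (1:ℝ))

lemma pair_claim {φ : S1 → S1} (hmono : ∀ p q r : S1, btw p q r → btw (φ p) (φ q) (φ r))
    {t u v w x : S1} (hu : φ u = t) (hv : φ v = t)
    (hw : sbtw u w v) (hx : sbtw v x u) : φ w = t ∨ φ x = t ∨ φ w = φ x := by
  rw [sbtw_iff] at hw hx
  set β := del u w with hβ
  set γ := del u v with hγ
  set ξ := del u x with hξ
  obtain ⟨hβ0, hβγ⟩ := hw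
  have hγ0 : 0 < γ := lt_trans hβ0 hβγ
  have hγ1 : γ < 1 := del_lt_one u v
  have huv : u ≠ v := fun h => by
    rw [hγ, show del u v = 0 from by rw [h, del_self]] at hγ0; linarith
  have hvu : del v u = 1 - γ := del_rev huv
  have hξ1 : ξ < 1 := del_lt_one u x
  -- show γ < ξ
  have hγξ : γ < ξ := by
    rcases lt_trichotomy ξ γ with hc | hc | hc
    · exfalso
      have : del v x = ξ - γ + 1 := by
        refine del_eq_of (by linarith [del_nonneg u x]) (by linarith) ?_
        rw [show ((ξ - γ + 1 : ℝ) : S1) = ((ξ:ℝ):S1) - ((γ:ℝ):S1) + ((1:ℝ):S1) by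
          rw [AddCircle.coe_add, AddCircle.coe_sub], coe_one_eq_zero,
          hξ, hγ, coe_del, coe_del]
        abel
      rw [this, hvu] at hx
      have := hx.2
      linarith [del_nonneg u x]
    · exfalso
      have : x = v := del_inj (show del u x = del u v by rw [← hξ, ← hγ, hc])
      rw [this, del_self] at hx
      exact lt_irrefl 0 hx.1
    · exact hc
  -- btw w v x
  have h1 : btw w v x := by
    rw [btw_iff]
    right
    have e1 : del w v = γ - β := by
      refine del_eq_of (by linarith) (by linarith) ?_
      rw [AddCircle.coe_sub, hγ, hβ, coe_del, coe_del]; abel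
    have e2 : del w x = ξ - β := by
      refine del_eq_of (by linarith) (by linarith) ?_
      rw [AddCircle.coe_sub, hξ, hβ, coe_del, coe_del]; abel
    rw [e1, e2]; linarith
  -- btw x u w
  have h2 : btw x u w := by
    rw [btw_iff]
    right
    have hux : u ≠ x := fun h => by
      rw [hξ, show del u x = 0 from by rw [h, del_self]] at hγξ; linarith
    have e1 : del x u = 1 - ξ := del_rev hux
    have e2 : del x w = β - ξ + 1 := by
      refine del_eq_of (by linarith) (by linarith) ?_
      rw [show ((β - ξ + 1 : ℝ) : S1) = ((β:ℝ):S1) - ((ξ:ℝ):S1) + ((1:ℝ):S1) by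
        rw [AddCircle.coe_add, AddCircle.coe_sub], coe_one_eq_zero,
        hβ, hξ, coe_del, coe_del]
      abel
    rw [e1, e2]; linarith
  have b1 := hmono w v x h1
  have b2 := hmono x u w h2
  rw [hv] at b1; rw [hu] at b2
  rcases b1.antisymm b2 with h | h | h
  · exact Or.inl h
  · exact Or.inr (Or.inl h.symm)
  · exact Or.inr (Or.inr h.symm)

lemma fiber_arc {φ : S1 → S1} (hsurj : Function.Surjective φ)
    (hmono : ∀ p q r : S1, btw p q r → btw (φ p) (φ q) (φ r))
    {t u v : S1} (hu : φ u = t) (hv : φ v = t) (huv : u ≠ v) :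
    (∀ w, sbtw u w v → φ w = t) ∨ (∀ w, sbtw v w u → φ w = t) := by
  by_contra hc
  push_neg at hc
  obtain ⟨⟨w, hw, hwt⟩, ⟨x, hx, hxt⟩⟩ := hc
  have hs := pair_claim hmono hu hv hw hx
  rcases hs with h | h | h
  · exact hwt h
  · exact hxt h
  set s := φ x with hsdef
  -- every point maps to t or s
  have hall : ∀ z : S1, φ z = t ∨ φ z = s := by
    intro z
    by_cases hzu : z = u
    · left; rw [hzu]; exact hu
    by_cases hzv : z = v
    · left; rw [hzv]; exact hv
    rcases sbtw_or (fun h' => hzu h'.symm) huv (fun h' => hzv h') with hz | hz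
    · rcases pair_claim hmono hu hv hz hx with h1 | h1 | h1
      · exact Or.inl h1
      · exact absurd h1 hxt
      · exact Or.inr h1
    · have hz' : sbtw v z u := sbtw_cyclic_left hz
      rcases pair_claim hmono hu hv hw hz' with h1 | h1 | h1
      · exact absurd h1 hwt
      · exact Or.inl h1
      · exact Or.inr (h1.symm.trans h)
  -- now contradict surjectivity
  have hst : s ≠ t := fun h' => hxt h'
  have hc1 : ((1/2 : ℝ) : S1) ≠ 0 := by
    intro h'
    have := rho_eq_of (by norm_num) (by norm_num) (rfl : (((1/2:ℝ)):S1) = ((1/2:ℝ):S1))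
    rw [h', rho_zero] at this; norm_num at this
  have hc2 : ((1/4 : ℝ) : S1) ≠ 0 := by
    intro h'
    have := rho_eq_of (by norm_num) (by norm_num) (rfl : (((1/4:ℝ)):S1) = ((1/4:ℝ):S1))
    rw [h', rho_zero] at this; norm_num at this
  have hc12 : ((1/2 : ℝ) : S1) ≠ ((1/4 : ℝ) : S1) := by
    intro h'
    have h'' : ((1/2 : ℝ) : S1) - ((1/4 : ℝ) : S1) = 0 := by rw [h']; abel
    rw [← AddCircle.coe_sub] at h''
    have := rho_eq_of (by norm_num) (by norm_num)
      (rfl : (((1/2 - 1/4:ℝ)):S1) = ((1/2 - 1/4:ℝ):S1))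
    rw [h'', rho_zero] at this; norm_num at this
  have key : ∃ y : S1, y ≠ t ∧ y ≠ s := by
    by_cases h1 : t + ((1/2 : ℝ) : S1) = s
    · refine ⟨t + ((1/4 : ℝ) : S1), ?_, ?_⟩
      · intro h'; exact hc2 (add_eq_left.mp h')
      · intro h'; rw [← h1] at h'; exact hc12 (add_left_cancel h').symm
    · refine ⟨t + ((1/2 : ℝ) : S1), ?_, h1⟩
      intro h'; exact hc1 (add_eq_left.mp h')
  obtain ⟨y, hyt, hys⟩ := key
  obtain ⟨z, hz⟩ := hsurj y
  rcases hall z with h' | h'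
  · exact hyt (hz ▸ h')
  · exact hys (hz ▸ h')


lemma coe_nsmul' (K : ℕ) (x : ℝ) : K • ((x : ℝ) : S1) = (((K : ℝ) * x : ℝ) : S1) := by
  rw [← AddCircle.coe_nsmul]; norm_num [nsmul_eq_mul]

lemma coe_int_eq_zero (z : ℤ) : (((z : ℝ)) : S1) = 0 := by
  rw [AddCircle.coe_eq_zero_iff]; exact ⟨z, by simp⟩

noncomputable def rnd (K : ℕ) (a : S1) : S1 := ((⌈rho a * K⌉ / K : ℝ) : S1)

lemma rnd_torsion (K : ℕ) (hK : 0 < K) (a : S1) : K • rnd K a = 0 := by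
  rw [rnd, coe_nsmul']
  have hK' : (K : ℝ) ≠ 0 := Nat.cast_ne_zero.mpr hK.ne'
  rw [show (K : ℝ) * (⌈rho a * K⌉ / K) = (⌈rho a * K⌉ : ℝ) by field_simp]
  exact coe_int_eq_zero _

lemma rnd_spec (K : ℕ) (hK : 0 < K) (a : S1) :
    rnd K a = a ∨ (0 < del a (rnd K a) ∧ del a (rnd K a) < 1 / K) := by
  have hK' : (0:ℝ) < K := Nat.cast_pos.mpr hK
  set r := rho a with hr
  set c : ℝ := ⌈r * K⌉ / K with hc
  have hle : r ≤ c := by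
    rw [hc, le_div_iff₀ hK']
    exact Int.le_ceil _
  have hlt : c < r + 1 / K := by
    rw [hc, div_lt_iff₀ hK']
    have := Int.ceil_lt_add_one (r * K)
    calc (⌈r * K⌉ : ℝ) < r * K + 1 := this
    _ = (r + 1 / K) * K := by field_simp
  rcases eq_or_lt_of_le hle with heq | hlt'
  · left
    rw [rnd, ← hr, ← hc, ← heq, hr, coe_rho]
  · right
    have hrnd : rnd K a = ((c : ℝ) : S1) := by rw [rnd, ← hr, ← hc]
    have hKone : 1 / (K:ℝ) ≤ 1 := by
      rw [div_le_one hK']; exact_mod_cast hK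
    have hdel : del a (rnd K a) = c - r := by
      refine del_eq_of (by linarith) (by linarith) ?_
      rw [hrnd, AddCircle.coe_sub, hr, coe_rho]
    rw [hdel]
    exact ⟨by linarith, by linarith⟩

lemma del_ge_of_torsion (K : ℕ) (hK : 0 < K) {a b : S1} (hne : a ≠ b)
    (h : K • (b - a) = 0) : 1 / (K:ℝ) ≤ del a b := by
  have hK' : (0:ℝ) < K := Nat.cast_pos.mpr hK
  have hγ0 : 0 < del a b := del_pos hne
  have h1 : (((K : ℝ) * del a b : ℝ) : S1) = 0 := by
    rw [← coe_nsmul', coe_del, h]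
  rw [AddCircle.coe_eq_zero_iff] at h1
  obtain ⟨z, hz⟩ := h1
  have hz' : (z : ℝ) = (K : ℝ) * del a b := by
    simpa using hz
  have hzpos : (0:ℝ) < z := by rw [hz']; positivity
  have hz1 : (1:ℝ) ≤ z := by exact_mod_cast (by exact_mod_cast hzpos : 0 < z)
  rw [div_le_iff₀ hK']
  nlinarith

lemma torsion_finite (K : ℕ) (hK : 0 < K) : {h : S1 | K • h = 0}.Finite := by
  apply Set.Finite.subset (Set.finite_range (fun i : Fin K => (((i : ℕ) / K : ℝ) : S1)))
  intro h hh
  simp only [Set.mem_setOf_eq] at hh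
  have hK' : (0:ℝ) < K := Nat.cast_pos.mpr hK
  set r := rho h with hr
  have h1 : (((K : ℝ) * r : ℝ) : S1) = 0 := by rw [← coe_nsmul', hr, coe_rho, hh]
  rw [AddCircle.coe_eq_zero_iff] at h1
  obtain ⟨z, hz⟩ := h1
  have hz' : (z : ℝ) = (K : ℝ) * r := by simpa using hz
  have hr0 : 0 ≤ r := rho_nonneg h
  have hr1 : r < 1 := rho_lt_one h
  have hz0 : 0 ≤ z := by exact_mod_cast (by rw [hz']; positivity : (0:ℝ) ≤ z)
  have hzK : z < K := by
    have : (z:ℝ) < K := by rw [hz']; nlinarith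
    exact_mod_cast this
  have hiK : z.toNat < K := by omega
  refine ⟨⟨z.toNat, hiK⟩, ?_⟩
  simp only
  have hcast : ((z.toNat : ℕ) : ℝ) = (z : ℝ) := by
    exact_mod_cast congrArg (Int.cast : ℤ → ℝ) (Int.toNat_of_nonneg hz0)
  rw [hcast, hz']
  have hKne : (K : ℝ) ≠ 0 := ne_of_gt hK'
  rw [show (K : ℝ) * r / K = r by field_simp]
  exact coe_rho h


lemma exists_torsion_in_fiber {φ : S1 → S1} (hsurj : Function.Surjective φ)
    (hmono : ∀ p q r : S1, btw p q r → btw (φ p) (φ q) (φ r))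
    (K : ℕ) (hK : 0 < K) {s u v : S1} (hu : φ u = s) (hv : φ v = s) (huv : u ≠ v)
    (htor : K • (v - u) = 0) : ∃ h : S1, K • h = 0 ∧ φ h = s := by
  have aux : ∀ u v : S1, φ u = s → φ v = s → u ≠ v → K • (v - u) = 0 →
      (∀ w, sbtw u w v → φ w = s) → ∃ h : S1, K • h = 0 ∧ φ h = s := by
    intro u v hu hv huv htor harc
    rcases rnd_spec K hK u with h | ⟨h1, h2⟩
    · exact ⟨rnd K u, rnd_torsion K hK u, by rw [h]; exact hu⟩
    · have hged := del_ge_of_torsion K hK huv htor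
      have hsb : sbtw u (rnd K u) v := (sbtw_iff _ _ _).mpr ⟨h1, lt_of_lt_of_le h2 hged⟩
      exact ⟨rnd K u, rnd_torsion K hK u, harc _ hsb⟩
  rcases fiber_arc hsurj hmono hu hv huv with h | h
  · exact aux u v hu hv huv htor h
  · refine aux v u hv hu huv.symm ?_ h
    rw [show u - v = -(v - u) by abel, smul_neg, htor, neg_zero]


lemma sig_iter (d m : ℕ) (x : S1) : (sig d)^[m] x = d ^ m • x := by
  induction m with
  | zero => simp
  | succ m ih =>
    rw [Function.iterate_succ_apply', ih]
    show d • (d ^ m • x) = d ^ (m + 1) • x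
    rw [← mul_smul, ← pow_succ']

lemma rot_inj {α : S1} (hirr : ∀ m : ℕ, 0 < m → m • α ≠ 0) {t : S1} {k l : ℕ}
    (h : t + k • α = t + l • α) : k = l := by
  have h' : k • α = l • α := add_left_cancel h
  by_contra hne
  rcases Nat.lt_or_ge k l with hlt | hge
  · have h0 : (l - k) • α + k • α = 0 + k • α := by
      rw [← add_nsmul, Nat.sub_add_cancel hlt.le, zero_add]
      exact h'.symm
    exact hirr (l - k) (by omega) (add_right_cancel h0)
  · have hlt : l < k := lt_of_le_of_ne hge (Ne.symm hne)
    have h0 : (k - l) • α + l • α = 0 + l • α := by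
      rw [← add_nsmul, Nat.sub_add_cancel hlt.le, zero_add]
      exact h'
    exact hirr (k - l) (by omega) (add_right_cancel h0)

lemma orbit_mem {d n : ℕ} {G : Set S1} (hGinv : ∀ x ∈ G, (sig d)^[n] x ∈ G)
    (j : ℕ) : ∀ x ∈ G, (sig d)^[j * n] x ∈ G := by
  induction j with
  | zero => intro x hx; simpa using hx
  | succ j ih =>
    intro x hx
    rw [show (j + 1) * n = j * n + n by ring, Function.iterate_add_apply]
    exact ih _ (hGinv x hx)

lemma phi_orbit {d n : ℕ} {G : Set S1} {φ : S1 → S1} {α : S1}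
    (hGinv : ∀ x ∈ G, (sig d)^[n] x ∈ G)
    (hsemi : ∀ x ∈ G, φ ((sig d)^[n] x) = φ x + α)
    (j : ℕ) : ∀ x ∈ G, φ ((sig d)^[j * n] x) = φ x + j • α := by
  induction j with
  | zero => intro x hx; simp
  | succ j ih =>
    intro x hx
    rw [show (j + 1) * n = j * n + n by ring, Function.iterate_add_apply]
    rw [ih _ (hGinv x hx), hsemi x hx, succ_nsmul]
    abel

end Stmt16Aux


open Stmt16Aux in
/-- Let G be the circle part of a periodic gap of period n whose first-return map is
monotonically semiconjugate (by a monotone continuous degree-one surjection φ) to an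
irrational rotation by α. If every edge of G is precritical, then every fiber of φ
contains only finitely many edges of G. -/
theorem stmt16 (d n : ℕ) (hd : 2 ≤ d) (hn : 0 < n)
    (G : Set S1) (hGinv : ∀ x ∈ G, (sig d)^[n] x ∈ G)
    (φ : S1 → S1) (α : S1)
    (hirr : ∀ m : ℕ, 0 < m → m • α ≠ 0)
    (hcont : Continuous φ) (hsurj : Function.Surjective φ)
    (hmono : ∀ p q r : S1, btw p q r → btw (φ p) (φ q) (φ r))
    (hsemi : ∀ x ∈ G, φ ((sig d)^[n] x) = φ x + α)
    (hpre : ∀ a b : S1, IsEdge G a b → ∃ m : ℕ, (sig d)^[m] a = (sig d)^[m] b) :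
    ∀ t : S1, {e : S1 × S1 | IsEdge G e.1 e.2 ∧ φ e.1 = t ∧ φ e.2 = t}.Finite := by
  intro t
  classical
  have hd0 : 0 < d := by omega
  set K := d ^ n with hKdef
  have hKpos : 0 < K := pow_pos hd0 n
  set E := {e : S1 × S1 | IsEdge G e.1 e.2 ∧ φ e.1 = t ∧ φ e.2 = t} with hE
  have main1 : ∀ e ∈ E, ∃ k : ℕ, (∃ h : S1, K • h = 0 ∧ φ h = t + k • α) ∧
      (sig d)^[(k + 1) * n] e.1 = (sig d)^[(k + 1) * n] e.2 := by
    rintro ⟨a, b⟩ ⟨he, ha, hb⟩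
    obtain ⟨m, hm⟩ := hpre a b he
    have hex : ∃ m : ℕ, (sig d)^[m] a = (sig d)^[m] b := ⟨m, hm⟩
    set m₀ := Nat.find hex with hm₀def
    have hm₀spec : (sig d)^[m₀] a = (sig d)^[m₀] b := Nat.find_spec hex
    have hm₀pos : 0 < m₀ := by
      rcases Nat.eq_zero_or_pos m₀ with h0 | h
      · exfalso
        rw [h0] at hm₀spec
        simp only [Function.iterate_zero_apply] at hm₀spec
        exact he.2.2.1 hm₀spec
      · exact h
    set k := (m₀ - 1) / n with hkdef
    have hkn : k * n ≤ m₀ - 1 := Nat.div_mul_le_self _ _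
    have hknlt : k * n < m₀ := lt_of_le_of_lt hkn (Nat.sub_lt hm₀pos one_pos)
    have hkn2 : m₀ ≤ (k + 1) * n := by
      have h1 := Nat.div_add_mod (m₀ - 1) n
      have h2 := Nat.mod_lt (m₀ - 1) hn
      calc m₀ = (m₀ - 1) + 1 := by omega
        _ = (n * ((m₀ - 1) / n) + (m₀ - 1) % n) + 1 := by rw [h1]
        _ = n * k + ((m₀ - 1) % n + 1) := by rw [← hkdef]; ring
        _ ≤ n * k + n := Nat.add_le_add_left (by omega) _
        _ = (k + 1) * n := by ring
    set u := (sig d)^[k * n] a with hu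
    set v := (sig d)^[k * n] b with hv
    have hφu : φ u = t + k • α := by rw [hu, phi_orbit hGinv hsemi k a he.1, ha]
    have hφv : φ v = t + k • α := by rw [hv, phi_orbit hGinv hsemi k b he.2.1, hb]
    have huv : u ≠ v := fun hq => Nat.find_min hex hknlt hq
    have hcol : (sig d)^[(k + 1) * n] a = (sig d)^[(k + 1) * n] b := by
      rw [← Nat.sub_add_cancel hkn2, Function.iterate_add_apply,
        Function.iterate_add_apply, hm₀spec]
    have htor : K • (v - u) = 0 := by
      have h1 : K • v = (sig d)^[(k + 1) * n] b := by
        rw [hKdef, ← sig_iter d n v, hv, ← Function.iterate_add_apply,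
          show n + k * n = (k + 1) * n by ring]
      have h2 : K • u = (sig d)^[(k + 1) * n] a := by
        rw [hKdef, ← sig_iter d n u, hu, ← Function.iterate_add_apply,
          show n + k * n = (k + 1) * n by ring]
      rw [smul_sub, h1, h2, hcol, sub_self]
    obtain ⟨h, hh1, hh2⟩ :=
      exists_torsion_in_fiber hsurj hmono K hKpos hφu hφv huv htor
    exact ⟨k, ⟨h, hh1, hh2⟩, hcol⟩
  have KSfin : {k : ℕ | ∃ h : S1, K • h = 0 ∧ φ h = t + k • α}.Finite := by
    set f : ℕ → S1 :=
      fun k => if hk : ∃ h : S1, K • h = 0 ∧ φ h = t + k • α then hk.choose else 0 with hf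
    apply Set.Finite.of_finite_image (f := f)
    · apply (torsion_finite K hKpos).subset
      rintro y ⟨kk, hkk, rfl⟩
      have hkk' : ∃ h : S1, K • h = 0 ∧ φ h = t + kk • α := hkk
      simp only [hf]
      rw [dif_pos hkk']
      exact hkk'.choose_spec.1
    · intro k1 hk1 k2 hk2 hfe
      have hk1' : ∃ h : S1, K • h = 0 ∧ φ h = t + k1 • α := hk1
      have hk2' : ∃ h : S1, K • h = 0 ∧ φ h = t + k2 • α := hk2
      have h1 : φ (f k1) = t + k1 • α := by
        simp only [hf]; rw [dif_pos hk1']; exact hk1'.choose_spec.2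
      have h2 : φ (f k2) = t + k2 • α := by
        simp only [hf]; rw [dif_pos hk2']; exact hk2'.choose_spec.2
      rw [hfe] at h1
      exact rot_inj hirr (h1.symm.trans h2)
  obtain ⟨B, hB⟩ := KSfin.bddAbove
  set M := (B + 1) * n with hM
  set D := d ^ M with hD
  have hDpos : 0 < D := pow_pos hd0 M
  have htorE : ∀ e ∈ E, D • (e.2 - e.1) = 0 := by
    rintro e he
    obtain ⟨k, hk1, hcol⟩ := main1 e he
    have hkB : k ≤ B := hB hk1
    have hle : (k + 1) * n ≤ M := by
      rw [hM]; exact Nat.mul_le_mul_right n (by omega)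
    have hcolM : (sig d)^[M] e.1 = (sig d)^[M] e.2 := by
      rw [← Nat.sub_add_cancel hle, Function.iterate_add_apply,
        Function.iterate_add_apply, hcol]
    rw [smul_sub, hD, ← sig_iter, ← sig_iter, hcolM, sub_self]
  set g : S1 × S1 → S1 := fun e => rnd D e.1 with hg
  have hgT : ∀ e : S1 × S1, D • g e = 0 := fun e => rnd_torsion D hDpos e.1
  have hdichot : ∀ e ∈ E, g e = e.1 ∨ sbtw e.1 (g e) e.2 := by
    rintro e heE
    rcases rnd_spec D hDpos e.1 with h | ⟨h1, h2⟩
    · exact Or.inl h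
    · right
      exact (sbtw_iff _ _ _).mpr ⟨h1, lt_of_lt_of_le h2
        (del_ge_of_torsion D hDpos heE.1.2.2.1 (htorE e heE))⟩
  have hsplit : E ⊆ (E ∩ {e | g e = e.1}) ∪ (E ∩ {e | g e ≠ e.1}) := by
    intro e he
    by_cases hc : g e = e.1
    · exact Or.inl ⟨he, hc⟩
    · exact Or.inr ⟨he, hc⟩
  refine Set.Finite.subset (Set.Finite.union ?_ ?_) hsplit
  · apply Set.Finite.of_finite_image (f := g)
    · exact (torsion_finite D hDpos).subset (by rintro y ⟨e, he, rfl⟩; exact hgT e)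
    · rintro e ⟨heE, hge⟩ e' ⟨heE', hge'⟩ hfe
      have h1 : e.1 = e'.1 := by rw [← hge, ← hge', hfe]
      have h2 : e.2 = e'.2 :=
        edge_unique_right (show IsEdge G e'.1 e.2 from h1 ▸ heE.1) heE'.1
      exact Prod.ext h1 h2
  · apply Set.Finite.of_finite_image (f := g)
    · exact (torsion_finite D hDpos).subset (by rintro y ⟨e, he, rfl⟩; exact hgT e)
    · rintro e ⟨heE, hge⟩ e' ⟨heE', hge'⟩ hfe
      by_contra hne
      have hsb : sbtw e.1 (g e) e.2 := (hdichot e heE).resolve_left hge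
      have hsb' : sbtw e'.1 (g e') e'.2 := (hdichot e' heE').resolve_left hge'
      rw [hfe] at hsb
      refine edges_disjoint heE.1 heE'.1 ?_ hsb hsb'
      intro hq
      apply hne
      rw [← Prod.mk.eta (p := e), ← Prod.mk.eta (p := e'), hq]
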